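/- arXiv:2404.07201 — 2 statements merged into one kernel-verified Lean document; each statement's English description precedes it below -/
import Mathlib

section
/- Fractional decoding of Reed–Solomon-type codes (Theorem 3.3 for the projective line): let c_1,…,c_n ∈ K be pairwise distinct evaluation points, let h_i(x) = x^{i-1} for i ∈ {1,…,k} (so f_a(x) = Σ_{i=1}^k a_i x^{i-1} is a polynomial of degree < k over L), let A_1,…,A_m be pairwise disjoint subsets of {c_1,…,c_n} with |A_1 ∪ … ∪ A_m| ≥ k, and let p_t(x) = Π_{c ∈ A_t}(x − c) ∈ K[x] for t ∈ {1,…,m}. Let B ∈ ℕ satisfy 2B < n − (k−1) − (l−m)·max_{t ∈ {1,…,m}} |A_t|. Then for all a, a' ∈ L^k with a ≠ a' and all e, e' ∈ L^n of Hamming weight at most B, the downloaded m×n arrays of the received words w = (f_a(c_1)+e_1,…,f_a(c_n)+e_n) and w' = (f_{a'}(c_1)+e'_1,…,f_{a'}(c_n)+e'_n) are distinct; hence up to B errors can be corrected using only m·n symbols of K. -/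
open Finset

noncomputable section

/-- `f_a(x) = Σ_{i=1}^k a_i h_i(x)`, with values `h_i(x) ∈ K` viewed in `L`. -/
def fa (K L : Type*) [Field K] [Field L] [Algebra K L] {X : Type*} {k : ℕ}
    (h : Fin k → X → K) (a : Fin k → L) (x : X) : L :=
  ∑ i, a i * algebraMap K L (h i x)

/-- The `s`-projection `(f_a)_s(x) = Σ_{i=1}^k tr(ζ_s a_i) h_i(x)`. -/
def sproj (K L : Type*) [Field K] [Field L] [Algebra K L] {X : Type*} {k : ℕ}
    (h : Fin k → X → K) (ζ : ℕ → L) (a : Fin k → L) (s : ℕ) (x : X) : K :=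
  ∑ i, Algebra.trace K L (ζ s * a i) * h i x

/-- `T_t(f_a) = (f_a)_{l-m+t}·p_t^{l-m} + Σ_{s=1}^{l-m} (f_a)_s·p_t^{s-1}`. -/
def Tt (K L : Type*) [Field K] [Field L] [Algebra K L] {X : Type*} {k : ℕ}
    (h : Fin k → X → K) (ζ : ℕ → L) (l m : ℕ) (p : ℕ → X → K)
    (a : Fin k → L) (t : ℕ) (x : X) : K :=
  sproj K L h ζ a (l - m + t) x * p t x ^ (l - m)
    + ∑ s ∈ Icc 1 (l - m), sproj K L h ζ a s x * p t x ^ (s - 1)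

/-- The downloaded symbol
`w_i^t = tr(ζ_{l-m+t} w_i)·p_t(c_i)^{l-m} + Σ_{s=1}^{l-m} tr(ζ_s w_i)·p_t(c_i)^{s-1}`. -/
def dl (K L : Type*) [Field K] [Field L] [Algebra K L] {X : Type*} {n : ℕ}
    (P : Fin n → X) (ζ : ℕ → L) (l m : ℕ) (p : ℕ → X → K)
    (w : Fin n → L) (i : Fin n) (t : ℕ) : K :=
  Algebra.trace K L (ζ (l - m + t) * w i) * p t (P i) ^ (l - m)
    + ∑ s ∈ Icc 1 (l - m), Algebra.trace K L (ζ s * w i) * p t (P i) ^ (s - 1)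

namespace FracDecAux

open Polynomial

variable {K L : Type*} [Field K] [Field L] [Algebra K L]

/-- The polynomial whose evaluation is the `s`-projection of `f_d`. -/
def gpoly (K L : Type*) [Field K] [Field L] [Algebra K L] {k : ℕ}
    (ζ : ℕ → L) (d : Fin k → L) (s : ℕ) : K[X] :=
  ∑ i : Fin k, C (Algebra.trace K L (ζ s * d i)) * X ^ (i : ℕ)

lemma gpoly_natDegree_lt {k : ℕ} (hk : 1 ≤ k) (ζ : ℕ → L) (d : Fin k → L) (s : ℕ) :
    (gpoly K L ζ d s).natDegree < k := by
  have h : (gpoly K L ζ d s).natDegree ≤ k - 1 :=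
    natDegree_sum_le_of_forall_le _ _ (fun i _ =>
      (natDegree_C_mul_X_pow_le _ _).trans (by have := i.isLt; omega))
  omega

lemma gpoly_eval {k : ℕ} (ζ : ℕ → L) (d : Fin k → L) (s : ℕ) (x : K) :
    (gpoly K L ζ d s).eval x
      = Algebra.trace K L (ζ s * fa K L (fun (i : Fin k) (x : K) => x ^ (i : ℕ)) d x) := by
  unfold gpoly fa
  rw [Finset.mul_sum, map_sum, Polynomial.eval_finset_sum]
  refine Finset.sum_congr rfl fun i _ => ?_
  have h : ζ s * (d i * (algebraMap K L) (x ^ (i : ℕ))) = (x ^ (i : ℕ)) • (ζ s * d i) := by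
    rw [Algebra.smul_def]; ring
  rw [h, map_smul, smul_eq_mul, eval_mul, eval_C, eval_pow, eval_X]
  ring

lemma gpoly_coeff {k : ℕ} (ζ : ℕ → L) (d : Fin k → L) (s : ℕ) (i : Fin k) :
    (gpoly K L ζ d s).coeff (i : ℕ) = Algebra.trace K L (ζ s * d i) := by
  unfold gpoly
  rw [finset_sum_coeff, Finset.sum_eq_single i]
  · rw [coeff_C_mul_X_pow]; simp
  · intro b _ hb
    rw [coeff_C_mul_X_pow, if_neg (fun h => hb (Fin.ext h.symm))]
  · simp

/-- `p_t` as a polynomial. -/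
def Ppoly (A : ℕ → Finset K) (t : ℕ) : K[X] := ∏ y ∈ A t, (X - C y)

lemma Ppoly_monic (A : ℕ → Finset K) (t : ℕ) : (Ppoly A t).Monic :=
  monic_prod_of_monic _ _ fun y _ => monic_X_sub_C y

lemma Ppoly_ne_zero (A : ℕ → Finset K) (t : ℕ) : Ppoly A t ≠ 0 :=
  (Ppoly_monic A t).ne_zero

lemma Ppoly_natDegree (A : ℕ → Finset K) (t : ℕ) : (Ppoly A t).natDegree = (A t).card := by
  unfold Ppoly
  rw [natDegree_prod _ _ fun y _ => X_sub_C_ne_zero y]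
  simp

lemma Ppoly_eval (A : ℕ → Finset K) (t : ℕ) (x : K) :
    (Ppoly A t).eval x = ∏ y ∈ A t, (x - y) := by
  simp [Ppoly, eval_prod]

lemma Ppoly_eval_zero (A : ℕ → Finset K) (t : ℕ) {y : K} (hy : y ∈ A t) :
    (Ppoly A t).eval y = 0 := by
  unfold Ppoly
  rw [eval_prod]
  exact Finset.prod_eq_zero hy (by simp)

lemma trace_sum_dual (l : ℕ) (ζ ν : ℕ → L)
    (hdual : ∀ s ∈ Icc 1 l, ∀ j ∈ Icc 1 l,
      Algebra.trace K L (ζ s * ν j) = if s = j then 1 else 0)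
    (j : Fin l) (gc : Fin l → K) :
    Algebra.trace K L (ζ (j.1 + 1) * ∑ i : Fin l, gc i • ν (i.1 + 1)) = gc j := by
  rw [Finset.mul_sum, map_sum]
  have h1 : ∀ i : Fin l, ζ (j.1 + 1) * (gc i • ν (i.1 + 1)) = gc i • (ζ (j.1 + 1) * ν (i.1 + 1)) :=
    fun i => mul_smul_comm _ _ _
  simp_rw [h1, map_smul, smul_eq_mul]
  have h2 : ∀ i : Fin l, Algebra.trace K L (ζ (j.1 + 1) * ν (i.1 + 1))
      = if j = i then 1 else 0 := by
    intro i
    rw [hdual (j.1 + 1) (Finset.mem_Icc.mpr ⟨by omega, j.isLt⟩)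
      (i.1 + 1) (Finset.mem_Icc.mpr ⟨by omega, i.isLt⟩)]
    simp [Fin.ext_iff]
  simp_rw [h2, mul_ite, mul_one, mul_zero]
  simp

lemma eq_zero_of_trace_basis (l : ℕ) (hl : 1 ≤ l) (hdim : Module.finrank K L = l)
    (ζ ν : ℕ → L) (bζ : Module.Basis (Fin l) K L)
    (hdual : ∀ s ∈ Icc 1 l, ∀ j ∈ Icc 1 l,
      Algebra.trace K L (ζ s * ν j) = if s = j then 1 else 0)
    (x : L) (hx : ∀ s ∈ Icc 1 l, Algebra.trace K L (ζ s * x) = 0) : x = 0 := by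
  haveI : Nonempty (Fin l) := ⟨⟨0, hl⟩⟩
  haveI := Module.Finite.of_basis bζ
  have li : LinearIndependent K (fun j : Fin l => ν (j.1 + 1)) := by
    rw [Fintype.linearIndependent_iff]
    intro gc hsum j
    have h := trace_sum_dual l ζ ν hdual j gc
    rw [hsum, mul_zero, map_zero] at h
    exact h.symm
  have card_eq : Fintype.card (Fin l) = Module.finrank K L := by simp [hdim]
  set bν := basisOfLinearIndependentOfCardEqFinrank li card_eq with hbν
  have hcoe : ⇑bν = fun j : Fin l => ν (j.1 + 1) := by
    rw [hbν]; exact coe_basisOfLinearIndependentOfCardEqFinrank li card_eq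
  rw [← (Module.Basis.forall_coord_eq_zero_iff bν)]
  intro j
  have hrepr : ∑ i : Fin l, bν.repr x i • ν (i.1 + 1) = x := by
    have h := bν.sum_repr x
    rwa [hcoe] at h
  have ht := trace_sum_dual l ζ ν hdual j (fun i => bν.repr x i)
  rw [hrepr] at ht
  rw [Module.Basis.coord_apply, ← ht]
  exact hx (j.1 + 1) (Finset.mem_Icc.mpr ⟨by omega, j.isLt⟩)

end FracDecAux

open FracDecAux Polynomial

/-- Theorem 3.3 for the projective line: fractional decoding of
Reed–Solomon-type codes, with `h_i(x) = x^{i-1}` and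
`p_t(x) = Π_{c ∈ A_t} (x - c)`: if `2B < n - (k-1) - (l-m)·max_t |A_t|`, then
received words from distinct messages with at most `B` errors each download to
distinct `m × n` arrays, so up to `B` errors can be corrected using only `m·n`
symbols of `K`. -/
theorem fractional_decoding_reed_solomon
    (K L : Type*) [Field K] [Fintype K] [DecidableEq K] [Field L] [Algebra K L]
    [DecidableEq L]
    (l : ℕ) (hl : 1 ≤ l) (hdim : Module.finrank K L = l)
    (ζ ν : ℕ → L) (bζ : Module.Basis (Fin l) K L) (hbζ : ∀ s : Fin l, bζ s = ζ (s.1 + 1))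
    (hdual : ∀ s ∈ Icc 1 l, ∀ j ∈ Icc 1 l,
      Algebra.trace K L (ζ s * ν j) = if s = j then 1 else 0)
    (m : ℕ) (hm1 : 1 ≤ m) (hm : m < l)
    (k : ℕ) (hk : 1 ≤ k)
    (n : ℕ) (c : Fin n → K) (hc : Function.Injective c)
    (A : ℕ → Finset K)
    (hA : ∀ t ∈ Icc 1 m, ∀ y ∈ A t, ∃ i : Fin n, c i = y)
    (hdisj : ∀ t ∈ Icc 1 m, ∀ t' ∈ Icc 1 m, t ≠ t' → Disjoint (A t) (A t'))
    (hcard : k ≤ ((Icc 1 m).biUnion A).card)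
    (B : ℕ)
    (hB : 2 * B + (k - 1) + (l - m) * ((Icc 1 m).sup fun t => (A t).card) < n) :
    ∀ a a' : Fin k → L, a ≠ a' → ∀ e e' : Fin n → L,
      hammingNorm e ≤ B → hammingNorm e' ≤ B →
      ∃ t ∈ Icc 1 m, ∃ i : Fin n,
        dl K L c ζ l m (fun t x => ∏ y ∈ A t, (x - y))
            (fun j => fa K L (fun (i : Fin k) (x : K) => x ^ (i : ℕ)) a (c j) + e j) i t
          ≠ dl K L c ζ l m (fun t x => ∏ y ∈ A t, (x - y))
            (fun j => fa K L (fun (i : Fin k) (x : K) => x ^ (i : ℕ)) a' (c j) + e' j) i t := by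
  classical
  intro a a' hne e e' he he'
  by_contra hcon
  push_neg at hcon
  set M := (Icc 1 m).sup fun t => (A t).card with hM
  set h : Fin k → K → K := fun i x => x ^ (i : ℕ) with hhdef
  set p : ℕ → K → K := fun t x => ∏ y ∈ A t, (x - y) with hpdef
  set d : Fin k → L := fun i => a i - a' i with hddef
  set E : Fin n → L := fun i => e i - e' i with hEdef
  -- fa is additive in the message
  have hfa : ∀ x : K, fa K L h a x - fa K L h a' x = fa K L h d x := by
    intro x
    unfold fa
    rw [← Finset.sum_sub_distrib]
    exact Finset.sum_congr rfl fun i _ => by rw [hddef]; ring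
  -- dl is linear in the received word
  have hdlsub : ∀ (w w' : Fin n → L) (i : Fin n) (t : ℕ),
      dl K L c ζ l m p w i t - dl K L c ζ l m p w' i t = dl K L c ζ l m p (w - w') i t := by
    intro w w' i t
    unfold dl
    have htr : ∀ s : ℕ, Algebra.trace K L (ζ s * (w - w') i)
        = Algebra.trace K L (ζ s * w i) - Algebra.trace K L (ζ s * w' i) := by
      intro s; rw [Pi.sub_apply, mul_sub, map_sub]
    simp only [htr, sub_mul, Finset.sum_sub_distrib]
    ring
  -- the downloaded array of the difference word vanishes
  have hdl0 : ∀ t ∈ Icc 1 m, ∀ i,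
      dl K L c ζ l m p (fun j => fa K L h d (c j) + E j) i t = 0 := by
    intro t ht i
    have h1 := hdlsub (fun j => fa K L h a (c j) + e j) (fun j => fa K L h a' (c j) + e' j) i t
    rw [hcon t ht i, sub_self] at h1
    have h2 : ((fun j => fa K L h a (c j) + e j) - fun j => fa K L h a' (c j) + e' j)
        = fun j => fa K L h d (c j) + E j := by
      funext j
      rw [Pi.sub_apply, hEdef, ← hfa (c j)]
      ring
    rw [h2] at h1
    exact h1.symm
  -- the polynomial identity : Q_t = 0
  have hQ0 : ∀ t ∈ Icc 1 m,
      gpoly K L ζ d (l - m + t) * (Ppoly A t) ^ (l - m)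
        + ∑ s ∈ Icc 1 (l - m), gpoly K L ζ d s * (Ppoly A t) ^ (s - 1) = 0 := by
    intro t ht
    set S : Finset K := (Finset.univ.filter fun i : Fin n => E i = 0).image c with hS
    apply Polynomial.eq_zero_of_natDegree_lt_card_of_eval_eq_zero' _ S
    · intro x hx
      rw [hS, Finset.mem_image] at hx
      obtain ⟨i, hi, rfl⟩ := hx
      have hEi : E i = 0 := (Finset.mem_filter.mp hi).2
      have h0 := hdl0 t ht i
      unfold dl at h0
      simp only [hEi, add_zero] at h0
      rw [eval_add, eval_mul, eval_pow, Polynomial.eval_finset_sum]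
      simp only [eval_mul, eval_pow, gpoly_eval, Ppoly_eval]
      exact h0
    · -- degree bound vs. number of points
      have hAM : (A t).card ≤ M := by rw [hM]; exact Finset.le_sup (f := fun t => (A t).card) ht
      have hdeg : (gpoly K L ζ d (l - m + t) * (Ppoly A t) ^ (l - m)
          + ∑ s ∈ Icc 1 (l - m), gpoly K L ζ d s * (Ppoly A t) ^ (s - 1)).natDegree
          ≤ (k - 1) + (l - m) * M := by
        refine (natDegree_add_le _ _).trans (max_le ?_ ?_)
        · refine natDegree_mul_le.trans ?_
          rw [natDegree_pow, Ppoly_natDegree]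
          have hg := gpoly_natDegree_lt (K := K) (L := L) hk ζ d (l - m + t)
          have : (l - m) * (A t).card ≤ (l - m) * M := Nat.mul_le_mul_left _ hAM
          omega
        · refine natDegree_sum_le_of_forall_le _ _ fun s hs => ?_
          refine natDegree_mul_le.trans ?_
          rw [natDegree_pow, Ppoly_natDegree]
          have hg := gpoly_natDegree_lt (K := K) (L := L) hk ζ d s
          obtain ⟨hs1, hs2⟩ := Finset.mem_Icc.mp hs
          have : (s - 1) * (A t).card ≤ (l - m) * M :=
            Nat.mul_le_mul (by omega) hAM
          omega
      have hcardS : (k - 1) + (l - m) * M < S.card := by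
        have h1 : S.card = (Finset.univ.filter fun i : Fin n => E i = 0).card := by
          rw [hS]; exact Finset.card_image_of_injective _ hc
        have h2 : (Finset.univ.filter fun i : Fin n => E i = 0).card
            + (Finset.univ.filter fun i : Fin n => ¬E i = 0).card = n := by
          rw [Finset.card_filter_add_card_filter_not]
          simp
        have h3 : (Finset.univ.filter fun i : Fin n => ¬E i = 0).card ≤ 2 * B := by
          have hno : hammingNorm E ≤ 2 * B := by
            have hEd : hammingNorm E = hammingDist e e' := by
              rw [hammingDist_eq_hammingNorm, hEdef]
              simp only [hammingNorm, Pi.add_apply, Pi.neg_apply, ne_eq, neg_add_eq_zero, sub_eq_zero]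
            have htri : hammingDist e e' ≤ hammingNorm e + hammingNorm e' := by
              calc hammingDist e e' ≤ hammingDist e 0 + hammingDist 0 e' :=
                    hammingDist_triangle e 0 e'
                _ = hammingNorm e + hammingNorm e' := by
                    rw [hammingDist_zero_right, hammingDist_zero_left]
            omega
          simpa [hammingNorm] using hno
        omega
      exact lt_of_le_of_lt hdeg hcardS
  have hPne : ∀ t : ℕ, (Ppoly A t : K[X]) ≠ 0 := fun t => Ppoly_ne_zero A t
  -- induction: the first l - m projections vanish
  have key : ∀ j, j ≤ l - m → ∀ s, 1 ≤ s → s ≤ j → gpoly K L ζ d s = 0 := by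
    intro j
    induction j with
    | zero => intro _ s h1 h2; omega
    | succ j ih =>
      intro hj s h1 h2
      rcases Nat.lt_or_ge s (j + 1) with hs | hs
      · exact ih (by omega) s h1 (by omega)
      · have hsj : s = j + 1 := by omega
        subst hsj
        have hvan : ∀ y ∈ (Icc 1 m).biUnion A, (gpoly K L ζ d (j + 1)).eval y = 0 := by
          intro y hy
          obtain ⟨t, ht, hyt⟩ := Finset.mem_biUnion.mp hy
          have hfac : gpoly K L ζ d (l - m + t) * (Ppoly A t) ^ (l - m)
              + ∑ s' ∈ Icc 1 (l - m), gpoly K L ζ d s' * (Ppoly A t) ^ (s' - 1)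
              = (Ppoly A t) ^ j * (gpoly K L ζ d (l - m + t) * (Ppoly A t) ^ (l - m - j)
                + ∑ s' ∈ Icc (j + 1) (l - m), gpoly K L ζ d s' * (Ppoly A t) ^ (s' - 1 - j)) := by
            have hsub : Icc (j + 1) (l - m) ⊆ Icc 1 (l - m) :=
              Finset.Icc_subset_Icc (by omega) le_rfl
            have hf : ∀ x ∈ Icc 1 (l - m), x ∉ Icc (j + 1) (l - m) →
                gpoly K L ζ d x * (Ppoly A t) ^ (x - 1) = 0 := by
              intro x hx hxn
              obtain ⟨hx1, hx2⟩ := Finset.mem_Icc.mp hx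
              have hxle : x ≤ j := by
                by_contra hcon2
                exact hxn (Finset.mem_Icc.mpr ⟨by omega, hx2⟩)
              rw [ih (by omega) x hx1 hxle, zero_mul]
            rw [mul_add, Finset.mul_sum]
            congr 1
            · rw [← mul_assoc, mul_comm ((Ppoly A t) ^ j), mul_assoc, ← pow_add]
              congr 2
              omega
            · rw [(Finset.sum_subset hsub hf).symm]
              refine Finset.sum_congr rfl fun s' hs' => ?_
              obtain ⟨hs'1, hs'2⟩ := Finset.mem_Icc.mp hs'
              rw [← mul_assoc, mul_comm ((Ppoly A t) ^ j), mul_assoc, ← pow_add]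
              congr 2
              omega
          have h0 := hQ0 t ht
          rw [hfac] at h0
          have hR : gpoly K L ζ d (l - m + t) * (Ppoly A t) ^ (l - m - j)
              + ∑ s' ∈ Icc (j + 1) (l - m), gpoly K L ζ d s' * (Ppoly A t) ^ (s' - 1 - j) = 0 :=
            (mul_eq_zero.mp h0).resolve_left (pow_ne_zero j (hPne t))
          have heval := congrArg (Polynomial.eval y) hR
          rw [eval_add, eval_mul, eval_pow, Ppoly_eval_zero A t hyt,
            zero_pow (by omega : l - m - j ≠ 0), mul_zero, zero_add,
            Polynomial.eval_finset_sum, eval_zero] at heval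
          have hsum : (∑ s' ∈ Icc (j + 1) (l - m),
              Polynomial.eval y (gpoly K L ζ d s' * (Ppoly A t) ^ (s' - 1 - j)))
              = (gpoly K L ζ d (j + 1)).eval y := by
            rw [Finset.sum_eq_single (j + 1)]
            · rw [show j + 1 - 1 - j = 0 by omega, pow_zero, mul_one]
            · intro s' hs' hne'
              obtain ⟨hs'1, _⟩ := Finset.mem_Icc.mp hs'
              rw [eval_mul, eval_pow, Ppoly_eval_zero A t hyt,
                zero_pow (by omega : s' - 1 - j ≠ 0), mul_zero]
            · intro hnot
              exact absurd (Finset.mem_Icc.mpr ⟨le_rfl, hj⟩) hnot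
          rw [hsum] at heval
          exact heval
        exact Polynomial.eq_zero_of_natDegree_lt_card_of_eval_eq_zero' _ _ hvan
          (lt_of_lt_of_le (gpoly_natDegree_lt (K := K) (L := L) hk ζ d (j + 1)) hcard)
  have hglow := key (l - m) le_rfl
  -- all projections vanish
  have hgall : ∀ s, 1 ≤ s → s ≤ l → gpoly K L ζ d s = 0 := by
    intro s h1 h2
    rcases le_or_gt s (l - m) with hsl | hsl
    · exact hglow s h1 hsl
    · have ht : s - (l - m) ∈ Icc 1 m := Finset.mem_Icc.mpr ⟨by omega, by omega⟩
      have h0 := hQ0 (s - (l - m)) ht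
      have hz : ∀ s' ∈ Icc 1 (l - m),
          gpoly K L ζ d s' * (Ppoly A (s - (l - m))) ^ (s' - 1) = 0 := by
        intro s' hs'
        obtain ⟨a1, a2⟩ := Finset.mem_Icc.mp hs'
        rw [hglow s' a1 a2, zero_mul]
      rw [Finset.sum_eq_zero hz, add_zero] at h0
      have hlmt : l - m + (s - (l - m)) = s := by omega
      rw [hlmt] at h0
      exact (mul_eq_zero.mp h0).resolve_right (pow_ne_zero _ (hPne _))
  -- all traces vanish
  have htr0 : ∀ i : Fin k, ∀ s ∈ Icc 1 l, Algebra.trace K L (ζ s * d i) = 0 := by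
    intro i s hs
    obtain ⟨h1, h2⟩ := Finset.mem_Icc.mp hs
    have hco := congrArg (fun q : K[X] => q.coeff (i : ℕ)) (hgall s h1 h2)
    simpa [gpoly_coeff] using hco
  -- conclude d = 0
  have hd0 : ∀ i : Fin k, d i = 0 := fun i =>
    eq_zero_of_trace_basis l hl hdim ζ ν bζ hdual (d i) (htr0 i)
  apply hne
  funext i
  have hi : a i - a' i = 0 := by
    have := hd0 i
    rwa [hddef] at this
  exact sub_eq_zero.mp hi

end
end

section
/- Row codewords of the Reed–Solomon-type virtual projection have large minimum distance: let c_1,…,c_n ∈ K be pairwise distinct, let h_i(x) = x^{i-1} for i ∈ {1,…,k}, let A_t ⊆ {c_1,…,c_n} and p_t(x) = Π_{c ∈ A_t}(x − c) ∈ K[x]. Then for every a ∈ L^k, T_t(f_a) ∈ K[x] is a polynomial of degree at most (k−1) + (l−m)·|A_t|, and consequently for any a, a' ∈ L^k, either T_t(f_a) = T_t(f_{a'}) as polynomials, or the vectors (T_t(f_a)(c_1),…,T_t(f_a)(c_n)) and (T_t(f_{a'})(c_1),…,T_t(f_{a'})(c_n)) in K^n differ in at least n − (k−1) − (l−m)·|A_t|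 coordinates. -/
open Finset Polynomial

noncomputable section

/-- The `s`-projection of `f_a(x) = Σ_{i=1}^k a_i x^{i-1}` as a polynomial:
`(f_a)_s(x) = Σ_{i=1}^k tr(ζ_s a_i) x^{i-1} ∈ K[x]`. -/
def sprojRS (K L : Type*) [Field K] [Field L] [Algebra K L] {k : ℕ}
    (ζ : ℕ → L) (a : Fin k → L) (s : ℕ) : Polynomial K :=
  ∑ i : Fin k, Polynomial.C (Algebra.trace K L (ζ s * a i)) * Polynomial.X ^ (i : ℕ)

/-- `T_t(f_a) = (f_a)_{l-m+t}·p_t^{l-m} + Σ_{s=1}^{l-m} (f_a)_s·p_t^{s-1} ∈ K[x]`,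
where `p_t(x) = Π_{c ∈ A}(x − c)`. -/
def TtRS (K L : Type*) [Field K] [Field L] [Algebra K L] {k : ℕ}
    (ζ : ℕ → L) (l m : ℕ) (A : Finset K) (a : Fin k → L) (t : ℕ) : Polynomial K :=
  sprojRS K L ζ a (l - m + t) * (∏ y ∈ A, (Polynomial.X - Polynomial.C y)) ^ (l - m)
    + ∑ s ∈ Icc 1 (l - m),
        sprojRS K L ζ a s * (∏ y ∈ A, (Polynomial.X - Polynomial.C y)) ^ (s - 1)

lemma sprojRS_natDegree_le (K L : Type*) [Field K] [Field L] [Algebra K L] {k : ℕ}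
    (ζ : ℕ → L) (a : Fin k → L) (s : ℕ) : (sprojRS K L ζ a s).natDegree ≤ k - 1 := by
  apply Polynomial.natDegree_sum_le_of_forall_le
  intro i _
  calc (Polynomial.C (Algebra.trace K L (ζ s * a i)) * Polynomial.X ^ (i : ℕ)).natDegree
      ≤ (i : ℕ) := by
        apply le_trans (Polynomial.natDegree_C_mul_le _ _)
        exact Polynomial.natDegree_X_pow_le _
    _ ≤ k - 1 := by have := i.2; omega

lemma TtRS_natDegree_le (K L : Type*) [Field K] [Field L] [Algebra K L] {k : ℕ}
    (ζ : ℕ → L) (l m : ℕ) (A : Finset K) (a : Fin k → L) (t : ℕ) :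
    (TtRS K L ζ l m A a t).natDegree ≤ (k - 1) + (l - m) * A.card := by
  have hp : (∏ y ∈ A, (Polynomial.X - Polynomial.C y)).natDegree = A.card :=
    by rw [Polynomial.natDegree_prod _ _ (fun y _ => Polynomial.X_sub_C_ne_zero y)]; simp
  apply le_trans (Polynomial.natDegree_add_le _ _)
  apply max_le
  · apply le_trans (Polynomial.natDegree_mul_le)
    gcongr
    · exact sprojRS_natDegree_le K L ζ a _
    · apply le_trans (Polynomial.natDegree_pow _ _).le
      rw [hp]
  · apply le_trans (Polynomial.natDegree_sum_le_of_forall_le _ _ ?_) le_rfl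
    intro s hs
    apply le_trans (Polynomial.natDegree_mul_le)
    gcongr
    · exact sprojRS_natDegree_le K L ζ a _
    · apply le_trans (Polynomial.natDegree_pow _ _).le
      rw [hp]
      have := (mem_Icc.mp hs).2
      exact Nat.mul_le_mul_right _ (by omega)

/-- each row codeword of the Reed–Solomon-type virtual projection
comes from a polynomial `T_t(f_a)` of degree at most `(k−1) + (l−m)·|A_t|`, so two
rows either coincide as polynomials or differ in at least
`n − (k−1) − (l−m)·|A_t|` coordinates. -/
theorem row_codewords_min_distance
    (K L : Type*) [Field K] [Fintype K] [DecidableEq K] [Field L] [Algebra K L]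
    (l : ℕ) (hl : 1 ≤ l) (hdim : Module.finrank K L = l)
    (ζ : ℕ → L) (bζ : Module.Basis (Fin l) K L) (hbζ : ∀ s : Fin l, bζ s = ζ (s.1 + 1))
    (m : ℕ) (hm1 : 1 ≤ m) (hm : m < l) (t : ℕ) (ht : t ∈ Icc 1 m)
    (k : ℕ) (n : ℕ) (c : Fin n → K) (hc : Function.Injective c)
    (A : Finset K) (hA : ∀ y ∈ A, ∃ i : Fin n, c i = y) :
    (∀ a : Fin k → L,
        (TtRS K L ζ l m A a t).natDegree ≤ (k - 1) + (l - m) * A.card)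
    ∧ (∀ a a' : Fin k → L,
        TtRS K L ζ l m A a t = TtRS K L ζ l m A a' t
        ∨ n - (k - 1) - (l - m) * A.card
            ≤ hammingDist (fun i : Fin n => (TtRS K L ζ l m A a t).eval (c i))
                (fun i : Fin n => (TtRS K L ζ l m A a' t).eval (c i))) := by
  refine ⟨fun a => TtRS_natDegree_le K L ζ l m A a t, fun a a' => ?_⟩
  by_cases h : TtRS K L ζ l m A a t = TtRS K L ζ l m A a' t
  · exact Or.inl h
  right
  set P := TtRS K L ζ l m A a t - TtRS K L ζ l m A a' t with hP
  have hPne : P ≠ 0 := sub_ne_zero_of_ne h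
  have hPdeg : P.natDegree ≤ (k - 1) + (l - m) * A.card := by
    apply le_trans (Polynomial.natDegree_sub_le _ _)
    exact max_le (TtRS_natDegree_le K L ζ l m A a t) (TtRS_natDegree_le K L ζ l m A a' t)
  -- roots of P among the c i
  have hroots : (univ.filter fun i : Fin n => P.eval (c i) = 0).card ≤ P.natDegree := by
    classical
    have himg : (univ.filter fun i : Fin n => P.eval (c i) = 0).image c ⊆ P.roots.toFinset := by
      intro y hy
      simp only [mem_image, mem_filter] at hy
      obtain ⟨i, ⟨_, hev⟩, rfl⟩ := hy
      simp [Multiset.mem_toFinset, Polynomial.mem_roots hPne, Polynomial.IsRoot, hev]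
    calc (univ.filter fun i : Fin n => P.eval (c i) = 0).card
        = ((univ.filter fun i : Fin n => P.eval (c i) = 0).image c).card := by
          rw [Finset.card_image_of_injective _ hc]
      _ ≤ P.roots.toFinset.card := Finset.card_le_card himg
      _ ≤ Multiset.card P.roots := Multiset.toFinset_card_le _
      _ ≤ P.natDegree := Polynomial.card_roots' P
  have hdist : hammingDist (fun i : Fin n => (TtRS K L ζ l m A a t).eval (c i))
      (fun i : Fin n => (TtRS K L ζ l m A a' t).eval (c i))
      = (univ.filter fun i : Fin n => ¬ (P.eval (c i) = 0)).card := by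
    rw [hammingDist]
    congr 1
    apply Finset.filter_congr
    intro i _
    simp [hP, sub_eq_zero]
  rw [hdist]
  have hsplit : (univ.filter fun i : Fin n => ¬ (P.eval (c i) = 0)).card
      = n - (univ.filter fun i : Fin n => P.eval (c i) = 0).card := by
    rw [Finset.filter_not, Finset.card_sdiff_of_subset (Finset.filter_subset _ _), Finset.card_univ,
      Fintype.card_fin]
  omega

end
end
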